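/- Let c ∈ ℝ³ and c₀ ∈ ℝ with ‖c‖² - c₀² = 1. Then there exist f, b ∈ ℝ³ satisfying: c₀ f + b × c = 0, f · c = 0, f · b = 0, and ‖f‖² - ‖b‖² = 1. -/

import Mathlib

open Matrix

lemma aux12 (c u : Fin 3 → ℝ) (c₀ : ℝ) (h : c ⬝ᵥ c - c₀ ^ 2 = 1)
    (hu : u ⬝ᵥ c = 0) (hD : u ⬝ᵥ u ≠ 0) :
    ∃ f b : Fin 3 → ℝ,
      c₀ • f + crossProduct b c = 0 ∧ f ⬝ᵥ c = 0 ∧ f ⬝ᵥ b = 0 ∧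
        f ⬝ᵥ f - b ⬝ᵥ b = 1 := by
  have hh : c 0 * c 0 + c 1 * c 1 + c 2 * c 2 - c₀ ^ 2 = 1 := by
    simpa [dotProduct, Fin.sum_univ_three] using h
  have hu' : u 0 * c 0 + u 1 * c 1 + u 2 * c 2 = 0 := by
    simpa [dotProduct, Fin.sum_univ_three] using hu
  have hD' : u 0 * u 0 + u 1 * u 1 + u 2 * u 2 ≠ 0 := by
    simpa [dotProduct, Fin.sum_univ_three] using hD
  have hDpos : 0 < u 0 * u 0 + u 1 * u 1 + u 2 * u 2 :=
    lt_of_le_of_ne (by nlinarith [mul_self_nonneg (u 0), mul_self_nonneg (u 1), mul_self_nonneg (u 2)]) (Ne.symm hD')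
  have hCpos : 0 < c 0 * c 0 + c 1 * c 1 + c 2 * c 2 := by nlinarith [sq_nonneg c₀]
  obtain ⟨α, hα⟩ : ∃ α : ℝ, α ^ 2 * (u 0 * u 0 + u 1 * u 1 + u 2 * u 2)
      = c 0 * c 0 + c 1 * c 1 + c 2 * c 2 := by
    refine ⟨Real.sqrt ((c 0 * c 0 + c 1 * c 1 + c 2 * c 2)
      / (u 0 * u 0 + u 1 * u 1 + u 2 * u 2)), ?_⟩
    rw [Real.sq_sqrt (by positivity)]
    exact div_mul_cancel₀ _ hD'
  obtain ⟨β, hβ⟩ : ∃ β : ℝ, β * (c 0 * c 0 + c 1 * c 1 + c 2 * c 2) = -(c₀ * α) :=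
    ⟨-(c₀ * α) / (c 0 * c 0 + c 1 * c 1 + c 2 * c 2), by rw [div_mul_cancel₀ _ hCpos.ne']⟩
  refine ⟨α • u, β • (crossProduct c u), ?_, ?_, ?_, ?_⟩
  · funext i
    fin_cases i <;> simp [crossProduct]
    · linear_combination u 0 * hβ - β * c 0 * hu'
    · linear_combination u 1 * hβ - β * c 1 * hu'
    · linear_combination u 2 * hβ - β * c 2 * hu'
  · simp only [dotProduct, Fin.sum_univ_three, Pi.smul_apply, smul_eq_mul]
    linear_combination α * hu'
  · simp [dotProduct, Fin.sum_univ_three, crossProduct]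
    ring
  · have hCne : (c 0 * c 0 + c 1 * c 1 + c 2 * c 2) ≠ 0 := hCpos.ne'
    apply mul_left_cancel₀ hCne
    simp [dotProduct, Fin.sum_univ_three, crossProduct, mul_sub, sub_mul, mul_add, add_mul]
    linear_combination (c 0 * c 0 + c 1 * c 1 + c 2 * c 2 - c₀ ^ 2) * hα
      - (β * (c 0 * c 0 + c 1 * c 1 + c 2 * c 2) - c₀ * α)
        * (u 0 * u 0 + u 1 * u 1 + u 2 * u 2) * hβ
      + β ^ 2 * (c 0 * c 0 + c 1 * c 1 + c 2 * c 2)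
        * (u 0 * c 0 + u 1 * c 1 + u 2 * c 2) * hu'
      + (c 0 * c 0 + c 1 * c 1 + c 2 * c 2) * hh

theorem stmt12 (c : Fin 3 → ℝ) (c₀ : ℝ) (h : c ⬝ᵥ c - c₀ ^ 2 = 1) :
    ∃ f b : Fin 3 → ℝ,
      c₀ • f + crossProduct b c = 0 ∧ f ⬝ᵥ c = 0 ∧ f ⬝ᵥ b = 0 ∧
        f ⬝ᵥ f - b ⬝ᵥ b = 1 := by
  by_cases h01 : c 0 * c 0 + c 1 * c 1 = 0
  · have h0 : c 0 = 0 := by nlinarith [mul_self_nonneg (c 0), mul_self_nonneg (c 1)]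
    refine aux12 c ![1, 0, 0] c₀ h ?_ ?_
    · simp [dotProduct, Fin.sum_univ_three, h0]
    · norm_num [dotProduct, Fin.sum_univ_three, Matrix.cons_val_two]
  · refine aux12 c ![-(c 1), c 0, 0] c₀ h ?_ ?_
    · simp [dotProduct, Fin.sum_univ_three]
      ring
    · intro hzero
      apply h01
      simp [dotProduct, Fin.sum_univ_three] at hzero
      linarith [hzero]
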